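/- Let β > 0, γ ∈ (0,1), τ ≥ 0, and let α : ℝ → (0,1] be nonincreasing. Then for every t ≥ 0, ∫₀ᵗ α(u) ( ∫₀ᵘ e^{−β(1−γ)(u−s)} α((s−τ)/2) ds ) du ≤ 2/(β²(1−γ)²) + (1/(β(1−γ))) ∫₀ᵗ α²((u−2τ)/4) du. -/

import Mathlib

open MeasureTheory intervalIntegral

/-- ∫ exp(r s) over an interval. -/
lemma exp_mul_integral (r a b : ℝ) (hr : r ≠ 0) :
    ∫ s in a..b, Real.exp (r * s) = (Real.exp (r * b) - Real.exp (r * a)) / r := by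
  have := intervalIntegral.integral_comp_mul_left (a := a) (b := b) (f := Real.exp) hr
  rw [integral_exp] at this
  rw [this, smul_eq_mul, div_eq_inv_mul]

/-- Equation (8b) in the proof of part (3) of Lemma 4.1. -/
theorem stmt_8 (β γ τ : ℝ) (hβ : 0 < β) (hγ : γ ∈ Set.Ioo (0:ℝ) 1) (hτ : 0 ≤ τ)
    (α : ℝ → ℝ) (hαpos : ∀ t, 0 < α t) (hαle : ∀ t, α t ≤ 1) (hanti : Antitone α) :
    ∀ t ≥ (0:ℝ),
      (∫ u in (0:ℝ)..t, α u *
        ∫ s in (0:ℝ)..u, Real.exp (-β * (1 - γ) * (u - s)) * α ((s - τ) / 2))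
      ≤ 2 / (β ^ 2 * (1 - γ) ^ 2)
        + (1 / (β * (1 - γ))) * ∫ u in (0:ℝ)..t, (α ((u - 2 * τ) / 4)) ^ 2 := by
  obtain ⟨hγ0, hγ1⟩ := hγ
  have hc : 0 < β * (1 - γ) := mul_pos hβ (by linarith)
  set c : ℝ := β * (1 - γ) with hcdef
  intro t ht
  have hαnn : ∀ x, (0:ℝ) ≤ α x := fun x => (hαpos x).le
  set g : ℝ → ℝ := fun s => α ((s - τ) / 2) with hgdef
  have hganti : Antitone g := fun a b hab =>
    hanti (show (a - τ) / 2 ≤ (b - τ) / 2 by linarith)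
  have hgint : ∀ a b : ℝ, IntervalIntegrable g volume a b := fun a b => hganti.intervalIntegrable
  have hαint : ∀ a b : ℝ, IntervalIntegrable α volume a b := fun a b => hanti.intervalIntegrable
  have hfint : ∀ (u a b : ℝ), IntervalIntegrable
      (fun s => Real.exp (-β * (1 - γ) * (u - s)) * g s) volume a b := by
    intro u a b
    exact (hgint a b).continuousOn_mul (Continuous.continuousOn (by fun_prop))
  have hexp : ∀ u s : ℝ, Real.exp (-β * (1 - γ) * (u - s))
      = Real.exp (-c * u) * Real.exp (c * s) := by
    intro u s; rw [← Real.exp_add, hcdef]; ring_nf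
  set P : ℝ → ℝ := fun u => ∫ s in (0:ℝ)..u, Real.exp (c * s) * g s with hPdef
  have hPcont : Continuous P :=
    intervalIntegral.continuous_primitive
      (fun a b => (hgint a b).continuousOn_mul (Continuous.continuousOn (by fun_prop))) 0
  set I : ℝ → ℝ := fun u => ∫ s in (0:ℝ)..u, Real.exp (-β * (1 - γ) * (u - s)) * g s with hIdef
  have hIeq : ∀ u, I u = Real.exp (-c * u) * P u := by
    intro u
    simp only [I, P]
    rw [← intervalIntegral.integral_const_mul]
    apply intervalIntegral.integral_congr
    intro s _
    show Real.exp (-β * (1 - γ) * (u - s)) * g s = Real.exp (-c * u) * (Real.exp (c * s) * g s)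
    rw [hexp]; ring
  have hIcont : Continuous I := by
    rw [show I = fun u => Real.exp (-c * u) * P u from funext hIeq]
    exact (Real.continuous_exp.comp (by fun_prop)).mul hPcont
  -- pointwise bound
  have key : ∀ u ∈ Set.Icc (0:ℝ) t,
      α u * I u ≤ Real.exp (-c * u / 2) / c + (α ((u - 2 * τ) / 4)) ^ 2 / c := by
    intro u hu
    have hu0 : (0:ℝ) ≤ u := hu.1
    have hhalf : (0:ℝ) ≤ u / 2 := by linarith
    set a4 : ℝ := α ((u - 2 * τ) / 4) with ha4
    have hsplit : I u = (∫ s in (0:ℝ)..(u/2), Real.exp (-β * (1 - γ) * (u - s)) * g s)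
        + ∫ s in (u/2)..u, Real.exp (-β * (1 - γ) * (u - s)) * g s :=
      (intervalIntegral.integral_add_adjacent_intervals (hfint u 0 (u/2)) (hfint u (u/2) u)).symm
    -- first part bound
    have h1 : (∫ s in (0:ℝ)..(u/2), Real.exp (-β * (1 - γ) * (u - s)) * g s)
        ≤ Real.exp (-c * u / 2) / c := by
      have hmono : (∫ s in (0:ℝ)..(u/2), Real.exp (-β * (1 - γ) * (u - s)) * g s)
          ≤ ∫ s in (0:ℝ)..(u/2), Real.exp (-β * (1 - γ) * (u - s)) := by
        apply intervalIntegral.integral_mono_on hhalf (hfint u 0 (u/2))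
          (Continuous.intervalIntegrable (by fun_prop) _ _)
        intro s _
        exact mul_le_of_le_one_right (Real.exp_pos _).le (hαle _)
      have hval : (∫ s in (0:ℝ)..(u/2), Real.exp (-β * (1 - γ) * (u - s)))
          = Real.exp (-c * u) * ((Real.exp (c * (u/2)) - Real.exp (c * 0)) / c) := by
        rw [show (fun s => Real.exp (-β * (1 - γ) * (u - s)))
            = fun s => Real.exp (-c * u) * Real.exp (c * s) from funext fun s => hexp u s]
        rw [intervalIntegral.integral_const_mul, exp_mul_integral _ _ _ hc.ne']
      have hle : Real.exp (-c * u) * ((Real.exp (c * (u/2)) - Real.exp (c * 0)) / c)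
          ≤ Real.exp (-c * u / 2) / c := by
        rw [mul_div_assoc', mul_sub, ← Real.exp_add, ← Real.exp_add,
          show -c * u + c * (u/2) = -c * u / 2 from by ring,
          show -c * u + c * 0 = -c * u from by ring]
        exact (div_le_div_iff_of_pos_right hc).mpr (by linarith [Real.exp_pos (-c * u)])
      calc _ ≤ _ := hmono
        _ = _ := hval
        _ ≤ _ := hle
    -- second part bound
    have h2 : (∫ s in (u/2)..u, Real.exp (-β * (1 - γ) * (u - s)) * g s) ≤ a4 / c := by
      have hmono : (∫ s in (u/2)..u, Real.exp (-β * (1 - γ) * (u - s)) * g s)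
          ≤ ∫ s in (u/2)..u, Real.exp (-β * (1 - γ) * (u - s)) * a4 := by
        apply intervalIntegral.integral_mono_on (by linarith) (hfint u (u/2) u)
          ((Continuous.intervalIntegrable (by fun_prop) _ _))
        intro s hs
        have hga : g s ≤ a4 :=
          hanti (show (u - 2 * τ) / 4 ≤ (s - τ) / 2 by linarith [hs.1])
        exact mul_le_mul_of_nonneg_left hga (Real.exp_pos _).le
      have hval : (∫ s in (u/2)..u, Real.exp (-β * (1 - γ) * (u - s)) * a4)
          = a4 * (Real.exp (-c * u) * ((Real.exp (c * u) - Real.exp (c * (u/2))) / c)) := by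
        rw [show (fun s => Real.exp (-β * (1 - γ) * (u - s)) * a4)
            = fun s => a4 * (Real.exp (-c * u) * Real.exp (c * s)) from
            funext fun s => by rw [hexp]; ring]
        rw [intervalIntegral.integral_const_mul, intervalIntegral.integral_const_mul,
          exp_mul_integral _ _ _ hc.ne']
      have hle : a4 * (Real.exp (-c * u) * ((Real.exp (c * u) - Real.exp (c * (u/2))) / c))
          ≤ a4 / c := by
        have hE : Real.exp (-c * u) * (Real.exp (c * u) - Real.exp (c * (u/2)))
            = 1 - Real.exp (-c * u / 2) := by
          rw [mul_sub, ← Real.exp_add, ← Real.exp_add,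
            show -c * u + c * u = 0 from by ring,
            show -c * u + c * (u/2) = -c * u / 2 from by ring, Real.exp_zero]
        have heq : a4 * (Real.exp (-c * u) * ((Real.exp (c * u) - Real.exp (c * (u/2))) / c))
            = a4 * (1 - Real.exp (-c * u / 2)) / c := by
          rw [← hE]; ring
        rw [heq]
        refine (div_le_div_iff_of_pos_right hc).mpr ?_
        nlinarith [Real.exp_pos (-c * u / 2), hαnn ((u - 2 * τ) / 4),
          Real.exp_le_one_iff.mpr (show -c * u / 2 ≤ 0 by nlinarith)]
      calc _ ≤ _ := hmono
        _ = _ := hval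
        _ ≤ _ := hle
    have hIle : I u ≤ Real.exp (-c * u / 2) / c + a4 / c := by rw [hsplit]; linarith
    have hαa4 : α u ≤ a4 := hanti (show (u - 2 * τ) / 4 ≤ u by linarith)
    have hA : 0 ≤ Real.exp (-c * u / 2) / c := by positivity
    have hB : 0 ≤ a4 / c := div_nonneg (hαnn _) hc.le
    have hmul := mul_le_mul_of_nonneg_left hIle (hαnn u)
    have h1le : α u ≤ 1 := hαle u
    have ha4nn : 0 ≤ a4 := hαnn _
    have hsq : a4 ^ 2 / c = a4 * (a4 / c) := by ring
    rw [hsq]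
    nlinarith [mul_le_mul_of_nonneg_right hαa4 hB, mul_le_mul_of_nonneg_right h1le hA]
  -- integrability of both sides
  have houter : IntervalIntegrable (fun u => α u * I u) volume 0 t :=
    (hαint 0 t).mul_continuousOn hIcont.continuousOn
  have ha4anti : Antitone (fun u : ℝ => (α ((u - 2 * τ) / 4)) ^ 2) := by
    intro a b hab
    have h1 : α ((b - 2 * τ) / 4) ≤ α ((a - 2 * τ) / 4) := hanti (by linarith)
    exact pow_le_pow_left₀ (hαnn _) h1 2
  have ha4int : ∀ a b : ℝ, IntervalIntegrable (fun u : ℝ => (α ((u - 2 * τ) / 4)) ^ 2) volume a b :=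
    fun a b => ha4anti.intervalIntegrable
  have hRint : IntervalIntegrable
      (fun u => Real.exp (-c * u / 2) / c + (α ((u - 2 * τ) / 4)) ^ 2 / c) volume 0 t := by
    apply IntervalIntegrable.add
    · exact Continuous.intervalIntegrable (by fun_prop) _ _
    · exact ((ha4int 0 t).div_const c)
  have hstep : (∫ u in (0:ℝ)..t, α u * I u)
      ≤ ∫ u in (0:ℝ)..t, (Real.exp (-c * u / 2) / c + (α ((u - 2 * τ) / 4)) ^ 2 / c) :=
    intervalIntegral.integral_mono_on ht houter hRint key
  have hsplitR : (∫ u in (0:ℝ)..t, (Real.exp (-c * u / 2) / c + (α ((u - 2 * τ) / 4)) ^ 2 / c))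
      = (∫ u in (0:ℝ)..t, Real.exp (-c * u / 2) / c)
        + ∫ u in (0:ℝ)..t, (α ((u - 2 * τ) / 4)) ^ 2 / c :=
    intervalIntegral.integral_add (Continuous.intervalIntegrable (by fun_prop) _ _)
      ((ha4int 0 t).div_const c)
  have hfirst : (∫ u in (0:ℝ)..t, Real.exp (-c * u / 2) / c) ≤ 2 / (β ^ 2 * (1 - γ) ^ 2) := by
    have hne : (-c/2 : ℝ) ≠ 0 := div_ne_zero (neg_ne_zero.mpr hc.ne') two_ne_zero
    have hval : (∫ u in (0:ℝ)..t, Real.exp (-c * u / 2) / c)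
        = ((Real.exp (-c/2 * t) - Real.exp (-c/2 * 0)) / (-c/2)) / c := by
      rw [intervalIntegral.integral_div]
      congr 1
      rw [show (fun u : ℝ => Real.exp (-c * u / 2)) = fun u => Real.exp (-c/2 * u) from
        funext fun u => by ring_nf]
      exact exp_mul_integral (-c/2) 0 t hne
    rw [hval]
    have he1 : Real.exp (-c/2 * t) ≤ 1 := Real.exp_le_one_iff.mpr (by nlinarith)
    have hep : 0 < Real.exp (-c/2 * t) := Real.exp_pos _
    have hc2 : β ^ 2 * (1 - γ) ^ 2 = c ^ 2 := by rw [hcdef]; ring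
    rw [hc2, show Real.exp (-c/2 * 0) = 1 from by norm_num]
    have heq : ((Real.exp (-c/2 * t) - 1) / (-c/2)) / c
        = (1 - Real.exp (-c/2 * t)) * 2 / c ^ 2 := by
      field_simp; ring
    rw [heq]
    refine (div_le_div_iff_of_pos_right (by positivity)).mpr ?_
    nlinarith
  have hsecond : (∫ u in (0:ℝ)..t, (α ((u - 2 * τ) / 4)) ^ 2 / c)
      = (1 / (β * (1 - γ))) * ∫ u in (0:ℝ)..t, (α ((u - 2 * τ) / 4)) ^ 2 := by
    rw [intervalIntegral.integral_div, ← hcdef]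
    ring
  calc (∫ u in (0:ℝ)..t, α u * I u) ≤ _ := hstep
    _ = _ := hsplitR
    _ ≤ 2 / (β ^ 2 * (1 - γ) ^ 2)
        + (1 / (β * (1 - γ))) * ∫ u in (0:ℝ)..t, (α ((u - 2 * τ) / 4)) ^ 2 := by
        rw [hsecond]; linarith
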